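/- Let q > 1 be odd and squarefree, r ≥ 1 an integer, and c = q r. Then for all integers m, m₁, m₂: |G(m, m₁, m₂; c)| ≤ q³ r². -/

import Mathlib

/-- `e_c(x) = exp(2πix/c)`. -/
noncomputable def ec (c : ℕ) (x : ℤ) : ℂ :=
  Complex.exp (2 * Real.pi * Complex.I * x / c)

/-- The Kloosterman sum `S(m, n; c) = Σ_{a d ≡ 1 (mod c)} e_c(a m + d n)`. -/
noncomputable def kloos (m n : ℤ) (c : ℕ) : ℂ :=
  ∑ a ∈ Finset.range c, ∑ d ∈ Finset.range c,
    if (a * d) % c = 1 % c then ec c (a * m + d * n) else 0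

/-- `G(m, m₁, m₂; c)` : complete sum of Kloosterman sums twisted by `χ_q`, for `q ∣ c`. -/
noncomputable def Gsum (q : ℕ) (m m1 m2 : ℤ) (c : ℕ) : ℂ :=
  ∑ a ∈ Finset.range c, ∑ a1 ∈ Finset.range c, ∑ a2 ∈ Finset.range c,
    (jacobiSym ((a : ℤ) * a1 * a2) q : ℂ) * kloos a ((a1 : ℤ) * a2) c *
      ec c (a * m + a1 * m1 + a2 * m2)

/-- `G'(m, m₁, m₂; c) = e_c(−m m₁ m₂) G(m, m₁, m₂; c)`. -/
noncomputable def Gsum' (q : ℕ) (m m1 m2 : ℤ) (c : ℕ) : ℂ :=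
  ec c (-(m * m1 * m2)) * Gsum q m m1 m2 c

/-- `H_r(m, m₁, m₂; q) = Σ_{u,v mod q} χ_q(v (u + v m₁)(v r − m)(u r + m m₁)) e_q(u m₂)`. -/
noncomputable def Hr (r m m1 m2 : ℤ) (q : ℕ) : ℂ :=
  ∑ u ∈ Finset.range q, ∑ v ∈ Finset.range q,
    (jacobiSym ((v : ℤ) * ((u : ℤ) + v * m1) * ((v : ℤ) * r - m) * ((u : ℤ) * r + m * m1)) q : ℂ) *
      ec q (u * m2)

/-- `H(w; q) = Σ_{u,v mod q} χ_q(u v (u+1)(v+1)) e_q((u v − 1) w)`. -/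
noncomputable def Hw (w : ℤ) (q : ℕ) : ℂ :=
  ∑ u ∈ Finset.range q, ∑ v ∈ Finset.range q,
    (jacobiSym ((u : ℤ) * v * ((u : ℤ) + 1) * ((v : ℤ) + 1)) q : ℂ) *
      ec q (((u : ℤ) * v - 1) * w)

/-- Reduced sum `H*(w; q)`, restricted by `gcd(uv − 1, q) = 1`. -/
noncomputable def Hstar (w : ℤ) (q : ℕ) : ℂ :=
  ∑ u ∈ Finset.range q, ∑ v ∈ Finset.range q,
    if Int.gcd ((u : ℤ) * v - 1) q = 1 then
      (jacobiSym ((u : ℤ) * v * ((u : ℤ) + 1) * ((v : ℤ) + 1)) q : ℂ) *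
        ec q (((u : ℤ) * v - 1) * w)
    else 0

/-- The Ramanujan sum `R(n; k) = Σ_{d mod k, (d,k)=1} e_k(d n)`. -/
noncomputable def Ram (n : ℤ) (k : ℕ) : ℂ :=
  ∑ d ∈ Finset.range k, if Nat.gcd d k = 1 then ec k (d * n) else 0

/-- The Gauss sum `τ(χ_q) = Σ_{x mod q} χ_q(x) e_q(x)`. -/
noncomputable def gaussτ (q : ℕ) : ℂ :=
  ∑ x ∈ Finset.range q, (jacobiSym (x : ℤ) q : ℂ) * ec q (x : ℤ)



lemma ec_add (c : ℕ) (x y : ℤ) : ec c (x + y) = ec c x * ec c y := by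
  rw [ec, ec, ec, ← Complex.exp_add]; congr 1; push_cast; ring

lemma ec_abs (c : ℕ) (x : ℤ) : ‖ec c x‖ = 1 := by
  have : (2 * Real.pi * Complex.I * x / c) = ((2 * Real.pi * x / c : ℝ) : ℂ) * Complex.I := by
    push_cast; ring
  rw [ec, this, Complex.norm_exp_ofReal_mul_I]

lemma ec_int_mul (c : ℕ) (k : ℤ) : ec c (c * k) = 1 := by
  rcases Nat.eq_zero_or_pos c with h | h
  · simp [ec, h]
  · rw [ec]
    have hc : (c : ℂ) ≠ 0 := by exact_mod_cast h.ne'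
    have : 2 * Real.pi * Complex.I * (((c : ℤ) * k : ℤ) : ℂ) / c
        = k * (2 * Real.pi * Complex.I) := by
      push_cast; field_simp
    rw [this, Complex.exp_int_mul_two_pi_mul_I]

lemma ec_dvd_eq_one (c : ℕ) {x : ℤ} (h : (c : ℤ) ∣ x) : ec c x = 1 := by
  obtain ⟨k, rfl⟩ := h; exact ec_int_mul c k

lemma ec_congr (c : ℕ) {x y : ℤ} (h : x % c = y % c) : ec c x = ec c y := by
  have hd : (c : ℤ) ∣ x - y := Int.ModEq.dvd (Int.ModEq.symm h)
  have h1 := ec_dvd_eq_one c hd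
  have h2 := ec_add c (x - y) y
  simp only [sub_add_cancel] at h2
  rw [h2, h1, one_mul]

lemma ec_pow (c : ℕ) (k : ℤ) (t : ℕ) : ec c (k * t) = (ec c k) ^ t := by
  rw [ec, ec, ← Complex.exp_nat_mul]; congr 1; push_cast; ring

lemma two_pi_I_ne_zero : (2 * (Real.pi:ℂ) * Complex.I) ≠ 0 := by
  simp [Real.pi_ne_zero, Complex.I_ne_zero, two_ne_zero]

lemma ec_eq_one_iff {c : ℕ} (hc : 0 < c) (k : ℤ) : ec c k = 1 ↔ (c : ℤ) ∣ k := by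
  constructor
  · intro h
    rw [ec, Complex.exp_eq_one_iff] at h
    obtain ⟨n, hn⟩ := h
    have hc' : (c : ℂ) ≠ 0 := by exact_mod_cast hc.ne'
    have hk : (k : ℂ) = n * c := by
      have h2 : 2 * (Real.pi:ℂ) * Complex.I * k = 2 * (Real.pi:ℂ) * Complex.I * (n * c) := by
        field_simp at hn
        rw [hn]; ring
      exact mul_left_cancel₀ two_pi_I_ne_zero h2
    have hk' : k = n * c := by exact_mod_cast (by push_cast; exact hk : (k:ℂ) = ((n*c:ℤ):ℂ))
    exact Dvd.intro_left n hk'.symm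
  · exact ec_dvd_eq_one c

lemma ec_conj (c : ℕ) (x : ℤ) : (starRingEnd ℂ) (ec c x) = ec c (-x) := by
  rw [ec, ec, ← Complex.exp_conj]
  congr 1
  simp only [map_div₀, map_mul, Complex.conj_I, map_ofNat, Complex.conj_ofReal]
  rw [map_intCast, map_natCast]
  push_cast
  ring

-- orthogonality
lemma sum_ec {n : ℕ} (hn : 0 < n) (k : ℤ) :
    ∑ t ∈ Finset.range n, ec n (k * t) = if (n:ℤ) ∣ k then (n:ℂ) else 0 := by
  split_ifs with h
  · have : ∀ t ∈ Finset.range n, ec n (k * t) = 1 :=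
      fun t _ => ec_dvd_eq_one n (Dvd.dvd.mul_right h _)
    rw [Finset.sum_congr rfl this]
    simp
  · have hz : ec n k ≠ 1 := fun hh => h ((ec_eq_one_iff hn k).mp hh)
    have : ∀ t ∈ Finset.range n, ec n (k * t) = (ec n k) ^ t := fun t _ => ec_pow n k t
    rw [Finset.sum_congr rfl this, geom_sum_eq hz]
    have : (ec n k) ^ n = 1 := by
      rw [← ec_pow, mul_comm]
      exact ec_int_mul n k
    rw [this, sub_self, zero_div]

open Finset

lemma sum_range_zmod {n : ℕ} [NeZero n] (f : ZMod n → ℂ) :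
    ∑ i ∈ Finset.range n, f (i : ZMod n) = ∑ x : ZMod n, f x := by
  refine Finset.sum_nbij' (i := fun i => (i : ZMod n)) (j := fun x => x.val) ?_ ?_ ?_ ?_ ?_
  · intro a _; exact Finset.mem_univ _
  · intro x _; exact Finset.mem_range.mpr (ZMod.val_lt x)
  · intro a ha; exact ZMod.val_cast_of_lt (Finset.mem_range.mp ha)
  · intro x _; exact ZMod.natCast_rightInverse x
  · intro a _; rfl

lemma sum_zmod_affine {n : ℕ} [NeZero n] (f : ZMod n → ℂ) {b : ZMod n} (hb : IsUnit b)
    (a : ZMod n) : ∑ x : ZMod n, f (b * x + a) = ∑ x : ZMod n, f x := by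
  apply Fintype.sum_bijective (fun x : ZMod n => b * x + a) _ _ _ (fun x => rfl)
  obtain ⟨u, rfl⟩ := hb
  constructor
  · intro x y h
    exact (Units.mul_right_inj u).mp (add_right_cancel h)
  · intro y
    exact ⟨(u⁻¹ : (ZMod n)ˣ) * (y - a), by simp [← mul_assoc]⟩

lemma sum_range_mul (a b : ℕ) (f : ℕ → ℂ) :
    ∑ i ∈ Finset.range (a * b), f i = ∑ u ∈ Finset.range a, ∑ s ∈ Finset.range b, f (u + a * s) := by
  rcases Nat.eq_zero_or_pos a with rfl | ha
  · simp
  rw [← Finset.sum_product']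
  refine (Finset.sum_nbij' (i := fun i => (i % a, i / a)) (j := fun p => p.1 + a * p.2)
    ?_ ?_ ?_ ?_ ?_).symm |>.symm
  · intro i hi
    rw [Finset.mem_range] at hi
    refine Finset.mem_product.mpr ⟨Finset.mem_range.mpr (Nat.mod_lt _ ha), Finset.mem_range.mpr ?_⟩
    exact Nat.div_lt_of_lt_mul (by omega)
  · intro p hp
    rw [Finset.mem_product, Finset.mem_range, Finset.mem_range] at hp
    refine Finset.mem_range.mpr ?_
    calc p.1 + a * p.2 < a + a * p.2 := by omega
    _ = a * (p.2 + 1) := by ring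
    _ ≤ a * b := Nat.mul_le_mul_left a (by omega)
  · intro i _
    simp [Nat.mod_add_div]
  · intro p hp
    rw [Finset.mem_product, Finset.mem_range, Finset.mem_range] at hp
    have h1 : (p.1 + a * p.2) % a = p.1 := by
      rw [Nat.add_mul_mod_self_left, Nat.mod_eq_of_lt hp.1]
    have h2 : (p.1 + a * p.2) / a = p.2 := by
      rw [Nat.add_mul_div_left _ _ ha, Nat.div_eq_of_lt hp.1, zero_add]
    simp [h1, h2]
  · intro i _; simp [Nat.mod_add_div]

noncomputable def gq (q : ℕ) (t : ℤ) : ℂ :=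
  ∑ u ∈ Finset.range q, (jacobiSym (u : ℤ) q : ℂ) * ec q ((u : ℤ) * t)

lemma isUnit_int_cast_zmod {q : ℕ} {t : ℤ} (h : Int.gcd t q = 1) : IsUnit (t : ZMod q) := by
  obtain ⟨a, b, hab⟩ := Int.isCoprime_iff_gcd_eq_one.mpr h
  refine IsUnit.of_mul_eq_one (a := (t : ZMod q)) (a : ZMod q) ?_
  have : ((a * t + b * q : ℤ) : ZMod q) = ((1 : ℤ) : ZMod q) := by rw [hab]
  push_cast at this
  rw [ZMod.natCast_self] at this
  simp only [mul_zero, add_zero] at this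
  rw [mul_comm]; exact_mod_cast this

lemma gq_zmod {q : ℕ} [NeZero q] (t : ℤ) :
    gq q t = ∑ x : ZMod q, (jacobiSym (x.val : ℤ) q : ℂ) * ec q ((x.val : ℤ) * t) := by
  rw [gq, ← sum_range_zmod (fun x : ZMod q => (jacobiSym (x.val : ℤ) q : ℂ) * ec q ((x.val : ℤ) * t))]
  refine Finset.sum_congr rfl fun u hu => ?_
  rw [ZMod.val_natCast_of_lt (Finset.mem_range.mp hu)]

/-- `|g(t)| = |g(1)|` for `t` coprime to `q`. -/
lemma gq_abs_coprime {q : ℕ} (hq0 : 0 < q) {t : ℤ} (h : Int.gcd t q = 1) :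
    ‖gq q t‖ = ‖gq q 1‖ := by
  haveI : NeZero q := ⟨hq0.ne'⟩
  have key : (jacobiSym t q : ℂ) * gq q t = gq q 1 := by
    rw [gq_zmod, gq_zmod, Finset.mul_sum]
    have ht : IsUnit ((t : ZMod q)) := isUnit_int_cast_zmod h
    rw [← sum_zmod_affine
      (fun x : ZMod q => (jacobiSym (x.val : ℤ) q : ℂ) * ec q ((x.val : ℤ) * 1)) ht 0]
    refine Finset.sum_congr rfl fun x _ => ?_
    simp only [add_zero]
    have hval : (((t : ZMod q) * x).val : ℤ) % q = (t * (x.val : ℤ)) % q := by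
      have : (((((t * (x.val : ℤ)) : ℤ)) : ZMod q)) = (t : ZMod q) * x := by
        push_cast
        rw [ZMod.natCast_val, ZMod.cast_id]
      rw [← this, ZMod.val_intCast]
      simp [Int.emod_emod_of_dvd]
    have hjac : (jacobiSym ((((t : ZMod q) * x).val : ℕ) : ℤ) q : ℂ)
        = (jacobiSym (t * (x.val : ℤ)) q : ℂ) := by
      norm_cast
      exact jacobiSym.mod_left' hval
    rw [hjac, jacobiSym.mul_left]
    have hec : ec q ((((t : ZMod q) * x).val : ℤ) * 1) = ec q ((x.val : ℤ) * t) := by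
      refine ec_congr q ?_
      rw [mul_one]
      calc (((t : ZMod q) * x).val : ℤ) % q = (t * (x.val : ℤ)) % q := hval
      _ = ((x.val : ℤ) * t) % q := by rw [mul_comm]
    rw [hec]
    push_cast
    ring
  have habs := congrArg (‖·‖) key
  rw [norm_mul] at habs
  have : ‖(jacobiSym t q : ℂ)‖ = 1 := by
    rcases jacobiSym.trichotomy t q with h0 | h1 | hm1
    · exfalso
      haveI : NeZero q := ⟨hq0.ne'⟩
      exact (jacobiSym.eq_zero_iff_not_coprime.mp h0) h
    · rw [h1]; simp
    · rw [hm1]; simp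
  rw [this, one_mul] at habs
  exact habs

lemma ec_mul_cancel {p : ℕ} (hp : 0 < p) (n : ℕ) (x : ℤ) :
    ec (p * n) ((p : ℤ) * x) = ec n x := by
  rcases Nat.eq_zero_or_pos n with rfl | hn
  · simp [ec]
  · rw [ec, ec]
    congr 1
    have hp' : (p : ℂ) ≠ 0 := by exact_mod_cast hp.ne'
    have hn' : (n : ℂ) ≠ 0 := by exact_mod_cast hn.ne'
    push_cast
    field_simp

lemma legendre_sum_zero_shift {p : ℕ} [hfp : Fact p.Prime] (hp2 : p ≠ 2) (b : ℕ) (v : ℤ)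
    (hb : Nat.Coprime b p) :
    ∑ s ∈ Finset.range p, (jacobiSym (v + (b : ℤ) * s) p : ℂ) = 0 := by
  haveI : NeZero p := ⟨hfp.out.pos.ne'⟩
  set F : ZMod p → ℂ := fun x => ((quadraticChar (ZMod p) x : ℤ) : ℂ) with hF
  have e1 : ∑ s ∈ Finset.range p, (jacobiSym (v + (b : ℤ) * s) p : ℂ)
      = ∑ s ∈ Finset.range p, (fun x : ZMod p => F ((b : ZMod p) * x + (v : ZMod p))) (s : ZMod p) := by
    refine Finset.sum_congr rfl fun s _ => ?_
    rw [← jacobiSym.legendreSym.to_jacobiSym]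
    have hc : ((v + (b : ℤ) * s : ℤ) : ZMod p) = (b : ZMod p) * (s : ZMod p) + (v : ZMod p) := by
      push_cast; ring
    rw [legendreSym, hc]
  have e2 := sum_range_zmod (fun x : ZMod p => F ((b : ZMod p) * x + (v : ZMod p)))
  have e3 := sum_zmod_affine F ((ZMod.isUnit_iff_coprime b p).mpr hb) ((v : ℤ) : ZMod p)
  have e4 : ∑ x : ZMod p, F x = 0 := by
    have hz := quadraticChar_sum_zero (F := ZMod p) (by rw [ZMod.ringChar_zmod_n]; exact hp2)
    rw [hF]
    calc ∑ x : ZMod p, ((quadraticChar (ZMod p) x : ℤ) : ℂ)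
        = ((∑ x : ZMod p, quadraticChar (ZMod p) x : ℤ) : ℂ) := by push_cast; rfl
      _ = 0 := by rw [hz]; simp
  rw [e1, e2]
  have hveq : ((v : ZMod p) : ZMod p) = ((v : ℤ) : ZMod p) := rfl
  rw [hveq] at *
  exact e3.trans e4

/-- The Gauss sum vanishes when `gcd(t, q) > 1`. -/
lemma gq_vanish {q : ℕ} (hq : 1 < q) (hodd : Odd q) (hsf : Squarefree q) {t : ℤ}
    (h : Int.gcd t q ≠ 1) : gq q t = 0 := by
  have hq0 : 0 < q := by omega
  have hdq : Int.gcd t q ∣ q := by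
    have := Int.gcd_dvd_right (a := t) (b := (q : ℤ))
    exact_mod_cast this
  obtain ⟨p, pp, hpd⟩ := Nat.exists_prime_and_dvd h
  have hpq : p ∣ q := hpd.trans hdq
  have hpt : (p : ℤ) ∣ t := by
    have h1 : ((Int.gcd t q : ℕ) : ℤ) ∣ t := Int.gcd_dvd_left _ _
    exact dvd_trans (Int.natCast_dvd_natCast.mpr hpd) h1
  obtain ⟨q₁, hq1⟩ := hpq
  have hp0 : 0 < p := pp.pos
  have hq10 : 0 < q₁ := by
    rcases Nat.eq_zero_or_pos q₁ with rfl | h; · omega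
    · exact h
  have hp2 : p ≠ 2 := by
    rintro rfl
    rcases hodd with ⟨k, hk⟩
    omega
  haveI : Fact p.Prime := ⟨pp⟩
  have hcop : Nat.Coprime q₁ p := by
    rw [Nat.coprime_comm]
    refine (Nat.Prime.coprime_iff_not_dvd pp).mpr fun hdvd => ?_
    have : p * p ∣ q := by rw [hq1]; exact mul_dvd_mul_left p hdvd
    exact pp.not_isUnit (hsf p this)
  obtain ⟨t₂, rfl⟩ := hpt
  have hrange : q = q₁ * p := by rw [hq1, mul_comm]
  have hsplit := sum_range_mul q₁ p
    (fun u => (jacobiSym (u : ℤ) q : ℂ) * ec q ((u : ℤ) * ((p : ℤ) * t₂)))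
  rw [← hrange] at hsplit
  rw [gq, hsplit]
  refine Finset.sum_eq_zero fun v hv => ?_
  have hterm : ∀ s ∈ Finset.range p,
      (jacobiSym ((v + q₁ * s : ℕ) : ℤ) q : ℂ) * ec q (((v + q₁ * s : ℕ) : ℤ) * ((p : ℤ) * t₂))
        = ((jacobiSym (v : ℤ) q₁ : ℂ) * ec q₁ ((v : ℤ) * t₂))
            * (jacobiSym ((v : ℤ) + (q₁ : ℤ) * s) p : ℂ) := by
    intro s _
    have hec : ec q (((v + q₁ * s : ℕ) : ℤ) * ((p : ℤ) * t₂)) = ec q₁ ((v : ℤ) * t₂) := by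
      have e1 : (((v + q₁ * s : ℕ) : ℤ) * ((p : ℤ) * t₂)) = (p : ℤ) * (((v + q₁ * s : ℕ) : ℤ) * t₂) := by
        ring
      rw [hq1, e1, ec_mul_cancel hp0]
      refine ec_congr q₁ ?_
      have : (((v + q₁ * s : ℕ) : ℤ) * t₂) % q₁ = (((v : ℤ) + (q₁ : ℤ) * s) * t₂) % q₁ := by
        push_cast; ring_nf
      rw [this]
      conv_rhs => rw [← Int.add_mul_emod_self_left (a := (v : ℤ) * t₂) (b := (q₁ : ℤ)) (c := (s : ℤ) * t₂)]
      congr 1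
      ring
    have hjac : (jacobiSym ((v + q₁ * s : ℕ) : ℤ) q : ℂ)
        = (jacobiSym ((v : ℤ) + (q₁ : ℤ) * s) p : ℂ) * (jacobiSym (v : ℤ) q₁ : ℂ) := by
      rw [hq1]
      rw [jacobiSym.mul_right' _ hp0.ne' hq10.ne']
      have h1 : ((v + q₁ * s : ℕ) : ℤ) = (v : ℤ) + (q₁ : ℤ) * s := by push_cast; ring
      rw [h1]
      have h2 : jacobiSym ((v : ℤ) + (q₁ : ℤ) * s) q₁ = jacobiSym (v : ℤ) q₁ := by
        refine jacobiSym.mod_left' ?_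
        rw [Int.add_mul_emod_self_left]
      rw [h2]
      push_cast
      ring
    rw [hec, hjac]
    ring
  rw [Finset.sum_congr rfl hterm, ← Finset.mul_sum]
  rw [legendre_sum_zero_shift hp2 q₁ v hcop, mul_zero]

lemma card_coprime_filter {q : ℕ} :
    ((Finset.range q).filter (fun u : ℕ => Int.gcd (u : ℤ) q = 1)).card = q.totient := by
  rw [Nat.totient_eq_card_coprime]
  congr 1
  apply Finset.filter_congr
  intro u _
  rw [Int.gcd_natCast_natCast]
  simp [Nat.Coprime, Nat.gcd_comm]

lemma jacobi_sq {q : ℕ} (hq0 : 0 < q) (u : ℤ) :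
    ((jacobiSym u q : ℂ)) ^ 2 = if Int.gcd u q = 1 then 1 else 0 := by
  haveI : NeZero q := ⟨hq0.ne'⟩
  split_ifs with h
  · rcases jacobiSym.trichotomy u q with h0 | h1 | hm1
    · exact absurd (jacobiSym.eq_zero_iff_not_coprime.mp h0) (by simpa using h)
    · rw [h1]; norm_num
    · rw [hm1]; norm_num
  · rw [jacobiSym.eq_zero_iff_not_coprime.mpr h]; norm_num

lemma gq_parseval {q : ℕ} (hq0 : 0 < q) :
    ∑ t ∈ Finset.range q, (gq q (t : ℤ)) * (starRingEnd ℂ) (gq q (t : ℤ))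
      = (q : ℂ) * (q.totient : ℂ) := by
  have hconj : ∀ t : ℤ, (starRingEnd ℂ) (gq q t)
      = ∑ v ∈ Finset.range q, (jacobiSym (v : ℤ) q : ℂ) * ec q (-((v : ℤ) * t)) := by
    intro t
    rw [gq, map_sum]
    refine Finset.sum_congr rfl fun v _ => ?_
    rw [map_mul, ec_conj, map_intCast]
  have hexp : ∀ t ∈ Finset.range q, (gq q (t : ℤ)) * (starRingEnd ℂ) (gq q (t : ℤ))
      = ∑ u ∈ Finset.range q, ∑ v ∈ Finset.range q,
          ((jacobiSym (u : ℤ) q : ℂ) * (jacobiSym (v : ℤ) q : ℂ))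
            * ec q (((u : ℤ) - v) * t) := by
    intro t _
    rw [hconj, gq, Finset.sum_mul_sum]
    refine Finset.sum_congr rfl fun u _ => Finset.sum_congr rfl fun v _ => ?_
    have : ((u : ℤ) - v) * t = (u : ℤ) * t + -((v : ℤ) * t) := by ring
    rw [this, ec_add]
    ring
  rw [Finset.sum_congr rfl hexp]
  rw [Finset.sum_comm]
  have hswap : ∀ u ∈ Finset.range q,
      (∑ t ∈ Finset.range q, ∑ v ∈ Finset.range q,
        ((jacobiSym (u : ℤ) q : ℂ) * (jacobiSym (v : ℤ) q : ℂ)) * ec q (((u : ℤ) - v) * t))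
      = (jacobiSym (u : ℤ) q : ℂ) ^ 2 * q := by
    intro u hu
    rw [Finset.sum_comm]
    have hinner : ∀ v ∈ Finset.range q,
        (∑ t ∈ Finset.range q,
          ((jacobiSym (u : ℤ) q : ℂ) * (jacobiSym (v : ℤ) q : ℂ)) * ec q (((u : ℤ) - v) * t))
        = if v = u then (jacobiSym (u : ℤ) q : ℂ) ^ 2 * q else 0 := by
      intro v hv
      rw [← Finset.mul_sum, sum_ec hq0]
      have hdvd : ((q : ℤ) ∣ ((u : ℤ) - v)) ↔ v = u := by
        constructor
        · intro hd
          have hu' := Finset.mem_range.mp hu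
          have hv' := Finset.mem_range.mp hv
          obtain ⟨k, hk⟩ := hd
          have : (u : ℤ) - v = 0 := by
            rcases lt_trichotomy k 0 with h | h | h
            · nlinarith [Int.ofNat_lt.mpr hu', Int.ofNat_lt.mpr hv']
            · rw [h, mul_zero] at hk; exact hk
            · nlinarith [Int.ofNat_lt.mpr hu', Int.ofNat_lt.mpr hv']
          omega
        · rintro rfl; simp
      split_ifs with h1 h2 h2
      · rw [h2]; ring
      · exact absurd (hdvd.mp h1) h2
      · exact absurd (hdvd.mpr h2) h1
      · rw [mul_zero]
    rw [Finset.sum_congr rfl hinner, Finset.sum_ite_eq' (Finset.range q) u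
      (fun _ => (jacobiSym (u : ℤ) q : ℂ) ^ 2 * q), if_pos hu]
  rw [Finset.sum_congr rfl hswap]
  have : ∀ u ∈ Finset.range q, (jacobiSym (u : ℤ) q : ℂ) ^ 2 * q
      = (if Int.gcd (u : ℤ) q = 1 then (1:ℂ) else 0) * q := by
    intro u _
    rw [jacobi_sq hq0]
  rw [Finset.sum_congr rfl this, ← Finset.sum_mul, Finset.sum_boole, card_coprime_filter]
  ring

lemma gq_abs_one {q : ℕ} (hq : 1 < q) (hodd : Odd q) (hsf : Squarefree q) :
    ‖gq q 1‖ = Real.sqrt q := by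
  have hq0 : 0 < q := by omega
  have hreal : ∑ t ∈ Finset.range q, Complex.normSq (gq q (t : ℤ))
      = (q : ℝ) * (q.totient : ℝ) := by
    have h := gq_parseval hq0
    have h2 : ∀ t ∈ Finset.range q, (gq q (t : ℤ)) * (starRingEnd ℂ) (gq q (t : ℤ))
        = ((Complex.normSq (gq q (t : ℤ)) : ℝ) : ℂ) := fun t _ => (Complex.mul_conj _)
    rw [Finset.sum_congr rfl h2] at h
    have : ((∑ t ∈ Finset.range q, Complex.normSq (gq q (t : ℤ)) : ℝ) : ℂ)
        = (((q : ℝ) * (q.totient : ℝ) : ℝ) : ℂ) := by push_cast at h ⊢; exact h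
    exact_mod_cast this
  have hsplit : ∑ t ∈ Finset.range q, Complex.normSq (gq q (t : ℤ))
      = (q.totient : ℝ) * Complex.normSq (gq q 1) := by
    rw [← Finset.sum_filter_add_sum_filter_not (Finset.range q)
      (fun t : ℕ => Int.gcd (t : ℤ) q = 1)]
    have hz : ∀ t ∈ (Finset.range q).filter (fun t : ℕ => ¬ Int.gcd (t : ℤ) q = 1),
        Complex.normSq (gq q (t : ℤ)) = 0 := by
      intro t ht
      rw [gq_vanish hq hodd hsf (Finset.mem_filter.mp ht).2]
      simp
    have hc : ∀ t ∈ (Finset.range q).filter (fun t : ℕ => Int.gcd (t : ℤ) q = 1),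
        Complex.normSq (gq q (t : ℤ)) = Complex.normSq (gq q 1) := by
      intro t ht
      have habs := gq_abs_coprime hq0 (Finset.mem_filter.mp ht).2
      rw [← Complex.sq_norm, ← Complex.sq_norm (gq q 1), habs]
    rw [Finset.sum_congr rfl hz, Finset.sum_congr rfl hc]
    rw [Finset.sum_const, Finset.sum_const, card_coprime_filter]
    simp [mul_comm]
  have htot : (0 : ℝ) < (q.totient : ℝ) := by
    have := Nat.totient_pos.mpr hq0
    exact_mod_cast this
  have hnorm : Complex.normSq (gq q 1) = q := by
    have := hsplit.symm.trans hreal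
    field_simp at this
    nlinarith [this]
  rw [Complex.norm_def, hnorm]

lemma gq_bound {q : ℕ} (hq : 1 < q) (hodd : Odd q) (hsf : Squarefree q) (t : ℤ) :
    ‖gq q t‖ ≤ Real.sqrt q := by
  by_cases h : Int.gcd t q = 1
  · rw [gq_abs_coprime (by omega) h, gq_abs_one hq hodd hsf]
  · rw [gq_vanish hq hodd hsf h]
    simp [Real.sqrt_nonneg]

noncomputable def Fsum (q r : ℕ) (t : ℤ) : ℂ :=
  ∑ a ∈ Finset.range (q * r), (jacobiSym (a : ℤ) q : ℂ) * ec (q * r) ((a : ℤ) * t)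

lemma Fsum_factor {q r : ℕ} (hq : 0 < q) (hr : 0 < r) (t : ℤ) :
    Fsum q r t = (∑ u ∈ Finset.range q, (jacobiSym (u : ℤ) q : ℂ) * ec (q * r) ((u : ℤ) * t))
      * (∑ s ∈ Finset.range r, ec r (t * s)) := by
  rw [Fsum, sum_range_mul q r, Finset.sum_mul]
  refine Finset.sum_congr rfl fun u _ => ?_
  rw [Finset.mul_sum]
  refine Finset.sum_congr rfl fun s _ => ?_
  have h1 : ((u + q * s : ℕ) : ℤ) * t = (u : ℤ) * t + (q : ℤ) * ((s : ℤ) * t) := by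
    push_cast; ring
  have h2 : (jacobiSym ((u + q * s : ℕ) : ℤ) q : ℂ) = (jacobiSym (u : ℤ) q : ℂ) := by
    norm_cast
    refine jacobiSym.mod_left' ?_
    push_cast
    rw [Int.add_mul_emod_self_left]
  rw [h1, ec_add, h2, ec_mul_cancel hq r ((s : ℤ) * t)]
  have h3 : ec r ((s : ℤ) * t) = ec r (t * s) := by rw [mul_comm]
  rw [h3]
  ring

lemma Fsum_eq_zero {q r : ℕ} (hq : 0 < q) (hr : 0 < r) {t : ℤ} (h : ¬ (r : ℤ) ∣ t) :
    Fsum q r t = 0 := by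
  rw [Fsum_factor hq hr, sum_ec hr t, if_neg h, mul_zero]

lemma Fsum_abs_le {q r : ℕ} (hq : 1 < q) (hodd : Odd q) (hsf : Squarefree q) (hr : 0 < r)
    (t : ℤ) : ‖Fsum q r t‖ ≤ (r : ℝ) * Real.sqrt q := by
  have hq0 : 0 < q := by omega
  by_cases h : (r : ℤ) ∣ t
  · obtain ⟨t', rfl⟩ := h
    rw [Fsum_factor hq0 hr, sum_ec hr, if_pos (Dvd.intro t' rfl), norm_mul]
    have h1 : ∀ u ∈ Finset.range q,
        (jacobiSym (u : ℤ) q : ℂ) * ec (q * r) ((u : ℤ) * ((r : ℤ) * t'))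
          = (jacobiSym (u : ℤ) q : ℂ) * ec q ((u : ℤ) * t') := by
      intro u _
      congr 1
      have e1 : (u : ℤ) * ((r : ℤ) * t') = (r : ℤ) * ((u : ℤ) * t') := by ring
      have e2 : q * r = r * q := by ring
      rw [e1, e2, ec_mul_cancel hr q ((u : ℤ) * t')]
    rw [Finset.sum_congr rfl h1]
    have : ‖(r : ℂ)‖ = (r : ℝ) := by
      rw [Complex.norm_natCast]
    rw [this, mul_comm]
    have hb := gq_bound hq hodd hsf t'
    rw [gq] at hb
    gcongr
  · rw [Fsum_eq_zero hq0 hr h]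
    simp
    positivity

/-- counting: at most `q` values of `x < q*r` in a fixed residue class mod `r`,
intersected with any condition. -/
lemma sum_abs_Fsum_le {q r : ℕ} (hq : 1 < q) (hodd : Odd q) (hsf : Squarefree q) (hr : 0 < r)
    {y : ℤ} (hy : Int.gcd y r = 1) (w : ℤ) :
    ∑ x ∈ Finset.range (q * r), ‖Fsum q r (y * x + w)‖
      ≤ (q : ℝ) * ((r : ℝ) * Real.sqrt q) := by
  have hq0 : 0 < q := by omega
  classical
  set P : ℕ → Prop := fun x => (r : ℤ) ∣ (y * x + w) with hP
  have hsplit : ∑ x ∈ Finset.range (q * r), ‖Fsum q r (y * x + w)‖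
      = ∑ x ∈ (Finset.range (q * r)).filter P, ‖Fsum q r (y * x + w)‖ := by
    rw [Finset.sum_filter_of_ne]
    intro x _ hne
    by_contra hnp
    exact hne (by rw [Fsum_eq_zero hq0 hr hnp, norm_zero])
  rw [hsplit]
  have hcard : ((Finset.range (q * r)).filter P).card ≤ q := by
    have : ((Finset.range (q * r)).filter P).card ≤ (Finset.range q).card := by
      refine Finset.card_le_card_of_injOn (fun x => x / r) ?_ ?_
      · intro x hx
        rw [Finset.mem_coe, Finset.mem_filter, Finset.mem_range] at hx
        rw [Finset.mem_coe, Finset.mem_range]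
        exact Nat.div_lt_of_lt_mul (by rw [mul_comm]; exact hx.1)
      · intro x hx x' hx' hxx
        rw [Finset.mem_coe, Finset.mem_filter] at hx hx'
        have hdvd : (r : ℤ) ∣ (y * x + w) - (y * x' + w) := dvd_sub hx.2 hx'.2
        have hdvd2 : (r : ℤ) ∣ y * ((x : ℤ) - x') := by
          have : (y * x + w) - (y * x' + w) = y * ((x : ℤ) - x') := by ring
          rwa [this] at hdvd
        have hcop : IsCoprime (r : ℤ) y := by
          rw [Int.isCoprime_iff_gcd_eq_one, Int.gcd_comm]
          exact hy
        have hdvd3 : (r : ℤ) ∣ ((x : ℤ) - x') := hcop.dvd_of_dvd_mul_left hdvd2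
        have hmod : x % r = x' % r := by
          have hm : (x : ℤ) ≡ (x' : ℤ) [ZMOD (r : ℤ)] := Int.ModEq.symm
            (Int.modEq_iff_dvd.mpr hdvd3)
          have h2 : (x : ℤ) % r = (x' : ℤ) % r := hm
          exact_mod_cast h2
        change x / r = x' / r at hxx
        calc x = r * (x / r) + x % r := (Nat.div_add_mod x r).symm
        _ = r * (x' / r) + x' % r := by rw [hmod, hxx]
        _ = x' := Nat.div_add_mod x' r
    simpa using this
  calc ∑ x ∈ (Finset.range (q * r)).filter P, ‖Fsum q r (y * x + w)‖
      ≤ ∑ _x ∈ (Finset.range (q * r)).filter P, ((r : ℝ) * Real.sqrt q) := by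
        refine Finset.sum_le_sum fun x _ => Fsum_abs_le hq hodd hsf hr _
    _ = (((Finset.range (q * r)).filter P).card : ℝ) * ((r : ℝ) * Real.sqrt q) := by
        rw [Finset.sum_const, nsmul_eq_mul]
    _ ≤ (q : ℝ) * ((r : ℝ) * Real.sqrt q) := by
        have hs : (0 : ℝ) ≤ (r : ℝ) * Real.sqrt q := by positivity
        have : (((Finset.range (q * r)).filter P).card : ℝ) ≤ (q : ℝ) := by exact_mod_cast hcard
        nlinarith

lemma sum5_reorder (s : Finset ℕ) (f : ℕ → ℕ → ℕ → ℕ → ℕ → ℂ) :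
    (∑ a ∈ s, ∑ a1 ∈ s, ∑ a2 ∈ s, ∑ x ∈ s, ∑ y ∈ s, f a a1 a2 x y)
      = ∑ x ∈ s, ∑ y ∈ s, ∑ a ∈ s, ∑ a2 ∈ s, ∑ a1 ∈ s, f a a1 a2 x y := by
  calc (∑ a ∈ s, ∑ a1 ∈ s, ∑ a2 ∈ s, ∑ x ∈ s, ∑ y ∈ s, f a a1 a2 x y)
      = ∑ a ∈ s, ∑ a1 ∈ s, ∑ x ∈ s, ∑ a2 ∈ s, ∑ y ∈ s, f a a1 a2 x y :=
        Finset.sum_congr rfl fun a _ => Finset.sum_congr rfl fun a1 _ => Finset.sum_comm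
    _ = ∑ a ∈ s, ∑ x ∈ s, ∑ a1 ∈ s, ∑ a2 ∈ s, ∑ y ∈ s, f a a1 a2 x y :=
        Finset.sum_congr rfl fun a _ => Finset.sum_comm
    _ = ∑ x ∈ s, ∑ a ∈ s, ∑ a1 ∈ s, ∑ a2 ∈ s, ∑ y ∈ s, f a a1 a2 x y := Finset.sum_comm
    _ = ∑ x ∈ s, ∑ a ∈ s, ∑ a1 ∈ s, ∑ y ∈ s, ∑ a2 ∈ s, f a a1 a2 x y :=
        Finset.sum_congr rfl fun x _ => Finset.sum_congr rfl fun a _ =>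
          Finset.sum_congr rfl fun a1 _ => Finset.sum_comm
    _ = ∑ x ∈ s, ∑ a ∈ s, ∑ y ∈ s, ∑ a1 ∈ s, ∑ a2 ∈ s, f a a1 a2 x y :=
        Finset.sum_congr rfl fun x _ => Finset.sum_congr rfl fun a _ => Finset.sum_comm
    _ = ∑ x ∈ s, ∑ y ∈ s, ∑ a ∈ s, ∑ a1 ∈ s, ∑ a2 ∈ s, f a a1 a2 x y :=
        Finset.sum_congr rfl fun x _ => Finset.sum_comm
    _ = ∑ x ∈ s, ∑ y ∈ s, ∑ a ∈ s, ∑ a2 ∈ s, ∑ a1 ∈ s, f a a1 a2 x y :=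
        Finset.sum_congr rfl fun x _ => Finset.sum_congr rfl fun y _ =>
          Finset.sum_congr rfl fun a _ => Finset.sum_comm

lemma Gsum_rearrange (q c : ℕ) (m m1 m2 : ℤ) :
    Gsum q m m1 m2 c = ∑ x ∈ Finset.range c, ∑ y ∈ Finset.range c,
      if (x * y) % c = 1 % c then
        (∑ a ∈ Finset.range c, (jacobiSym (a : ℤ) q : ℂ) * ec c ((a : ℤ) * ((x : ℤ) + m))) *
        (∑ a2 ∈ Finset.range c, (jacobiSym (a2 : ℤ) q : ℂ) * ec c ((a2 : ℤ) * m2) *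
          (∑ a1 ∈ Finset.range c,
            (jacobiSym (a1 : ℤ) q : ℂ) * ec c ((a1 : ℤ) * ((y : ℤ) * a2 + m1))))
      else 0 := by
  classical
  set T : ℕ → ℕ → ℕ → ℕ → ℕ → ℂ := fun a a1 a2 x y =>
    if (x * y) % c = 1 % c then
      ((jacobiSym (a : ℤ) q : ℂ) * ec c ((a : ℤ) * ((x : ℤ) + m))) *
        (((jacobiSym (a2 : ℤ) q : ℂ) * ec c ((a2 : ℤ) * m2)) *
          ((jacobiSym (a1 : ℤ) q : ℂ) * ec c ((a1 : ℤ) * ((y : ℤ) * a2 + m1))))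
    else 0 with hT
  have L : Gsum q m m1 m2 c
      = ∑ a ∈ Finset.range c, ∑ a1 ∈ Finset.range c, ∑ a2 ∈ Finset.range c,
          ∑ x ∈ Finset.range c, ∑ y ∈ Finset.range c, T a a1 a2 x y := by
    rw [Gsum]
    refine Finset.sum_congr rfl fun a _ => Finset.sum_congr rfl fun a1 _ =>
      Finset.sum_congr rfl fun a2 _ => ?_
    rw [kloos]
    have habc : ∀ (J K E : ℂ), J * K * E = K * (J * E) := fun _ _ _ => by ring
    rw [habc, Finset.sum_mul]
    refine Finset.sum_congr rfl fun x _ => ?_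
    rw [Finset.sum_mul]
    refine Finset.sum_congr rfl fun y _ => ?_
    rw [hT]
    simp only [ite_mul, zero_mul]
    split_ifs with h
    · rw [jacobiSym.mul_left, jacobiSym.mul_left]
      rw [ec_add c ((x : ℤ) * a) ((y : ℤ) * ((a1 : ℤ) * a2))]
      rw [ec_add c ((a : ℤ) * m + (a1 : ℤ) * m1) ((a2 : ℤ) * m2)]
      rw [ec_add c ((a : ℤ) * m) ((a1 : ℤ) * m1)]
      rw [show (a : ℤ) * ((x : ℤ) + m) = (x : ℤ) * a + (a : ℤ) * m from by ring]
      rw [ec_add c ((x : ℤ) * a) ((a : ℤ) * m)]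
      rw [show (a1 : ℤ) * ((y : ℤ) * a2 + m1) = (y : ℤ) * ((a1 : ℤ) * a2) + (a1 : ℤ) * m1
        from by ring]
      rw [ec_add c ((y : ℤ) * ((a1 : ℤ) * a2)) ((a1 : ℤ) * m1)]
      push_cast
      ring
    · rfl
  rw [L, sum5_reorder]
  refine Finset.sum_congr rfl fun x _ => Finset.sum_congr rfl fun y _ => ?_
  by_cases h : (x * y) % c = 1 % c
  · rw [if_pos h]
    simp only [hT, if_pos h]
    rw [Finset.sum_mul_sum]
    refine Finset.sum_congr rfl fun a _ => Finset.sum_congr rfl fun a2 _ => ?_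
    rw [Finset.mul_sum, Finset.mul_sum]
  · rw [if_neg h]
    simp only [hT, if_neg h]
    simp

lemma jacobi_abs_le (a : ℤ) (q : ℕ) : ‖(jacobiSym a q : ℂ)‖ ≤ 1 := by
  rcases jacobiSym.trichotomy a q with h | h | h <;> rw [h] <;> simp

/-- Corollary 10.3: for `q > 1` odd squarefree, `r ≥ 1` and `c = q r`,
`|G(m, m₁, m₂; c)| ≤ q³ r²`. -/
theorem Gsum_bound (q r : ℕ) (hq : 1 < q) (hodd : Odd q) (hsf : Squarefree q) (hr : 1 ≤ r)
    (m m1 m2 : ℤ) :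
    ‖Gsum q m m1 m2 (q * r)‖ ≤ (q : ℝ) ^ 3 * (r : ℝ) ^ 2 := by
  classical
  have hq0 : 0 < q := by omega
  have hr0 : 0 < r := hr
  have hc1 : 1 < q * r := by
    have : q ≤ q * r := Nat.le_mul_of_pos_right q hr0
    omega
  set c := q * r with hc
  set D : ℝ := (q : ℝ) * ((r : ℝ) * Real.sqrt q) with hD
  have hD0 : 0 ≤ D := by positivity
  have hcond_gcd : ∀ x y : ℕ, (x * y) % c = 1 % c → Int.gcd (y : ℤ) r = 1 := by
    intro x y h
    rw [Nat.mod_eq_of_lt hc1] at h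
    have hdm := Nat.div_add_mod (x * y) c
    rw [h] at hdm
    have h2 : (c : ℤ) ∣ (x : ℤ) * y - 1 := by
      refine ⟨((x * y) / c : ℕ), ?_⟩
      have h6 : ((x : ℤ) * y) = (c : ℤ) * ((x * y / c : ℕ) : ℤ) + 1 := by
        exact_mod_cast hdm.symm
      linarith
    have h3 : (r : ℤ) ∣ (x : ℤ) * y - 1 := dvd_trans ⟨(q : ℤ), by push_cast [hc]; ring⟩ h2
    have hdy : (Int.gcd (y : ℤ) r : ℤ) ∣ (y : ℤ) := Int.gcd_dvd_left _ _
    have hdr : (Int.gcd (y : ℤ) r : ℤ) ∣ (r : ℤ) := Int.gcd_dvd_right _ _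
    have h4 : (Int.gcd (y : ℤ) r : ℤ) ∣ (x : ℤ) * y := Dvd.dvd.mul_left hdy x
    have h5 : (Int.gcd (y : ℤ) r : ℤ) ∣ 1 := by
      have := dvd_sub h4 (hdr.trans h3)
      simpa using this
    exact Nat.dvd_one.mp (by exact_mod_cast h5)
  have hinner : ∀ x y : ℕ, (x * y) % c = 1 % c →
      ‖∑ a2 ∈ Finset.range c, (jacobiSym (a2 : ℤ) q : ℂ) * ec c ((a2 : ℤ) * m2) *
        (∑ a1 ∈ Finset.range c,
          (jacobiSym (a1 : ℤ) q : ℂ) * ec c ((a1 : ℤ) * ((y : ℤ) * a2 + m1)))‖ ≤ D := by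
    intro x y hxy
    have step1 : ∀ a2 : ℕ,
        (∑ a1 ∈ Finset.range c, (jacobiSym (a1 : ℤ) q : ℂ) * ec c ((a1 : ℤ) * ((y : ℤ) * a2 + m1)))
          = Fsum q r ((y : ℤ) * a2 + m1) := fun a2 => rfl
    calc ‖∑ a2 ∈ Finset.range c, (jacobiSym (a2 : ℤ) q : ℂ) * ec c ((a2 : ℤ) * m2) *
          (∑ a1 ∈ Finset.range c,
            (jacobiSym (a1 : ℤ) q : ℂ) * ec c ((a1 : ℤ) * ((y : ℤ) * a2 + m1)))‖
        ≤ ∑ a2 ∈ Finset.range c, ‖(jacobiSym (a2 : ℤ) q : ℂ) * ec c ((a2 : ℤ) * m2) *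
            (∑ a1 ∈ Finset.range c,
              (jacobiSym (a1 : ℤ) q : ℂ) * ec c ((a1 : ℤ) * ((y : ℤ) * a2 + m1)))‖ :=
          norm_sum_le _ _
      _ ≤ ∑ a2 ∈ Finset.range c, ‖Fsum q r ((y : ℤ) * a2 + m1)‖ := by
          refine Finset.sum_le_sum fun a2 _ => ?_
          rw [step1 a2, norm_mul, norm_mul, ec_abs, mul_one]
          have h1 := jacobi_abs_le (a2 : ℤ) q
          have h2 := norm_nonneg (Fsum q r ((y : ℤ) * a2 + m1))
          nlinarith
      _ ≤ D := by
          rw [hD, hc]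
          exact sum_abs_Fsum_le hq hodd hsf hr0 (hcond_gcd x y hxy) m1
  have hcard1 : ∀ x : ℕ, ((Finset.range c).filter (fun y => (x * y) % c = 1 % c)).card ≤ 1 := by
    intro x
    refine Finset.card_le_one.mpr fun y hy y' hy' => ?_
    rw [Finset.mem_filter, Finset.mem_range] at hy hy'
    have e1 : ((x * y : ℕ) : ZMod c) = ((1 : ℕ) : ZMod c) := (ZMod.natCast_eq_natCast_iff _ _ _).mpr hy.2
    have e2 : ((x * y' : ℕ) : ZMod c) = ((1 : ℕ) : ZMod c) := (ZMod.natCast_eq_natCast_iff _ _ _).mpr hy'.2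
    push_cast at e1 e2
    have e3 : (y : ZMod c) = (y' : ZMod c) := by
      calc (y : ZMod c) = (y : ZMod c) * ((x : ZMod c) * y') := by rw [e2, mul_one]
        _ = ((x : ZMod c) * y) * y' := by ring
        _ = (y' : ZMod c) := by rw [e1, one_mul]
    have := congrArg ZMod.val e3
    rwa [ZMod.val_cast_of_lt hy.1, ZMod.val_cast_of_lt hy'.1] at this
  rw [Gsum_rearrange]
  calc ‖∑ x ∈ Finset.range c, ∑ y ∈ Finset.range c,
        if (x * y) % c = 1 % c then
          (∑ a ∈ Finset.range c, (jacobiSym (a : ℤ) q : ℂ) * ec c ((a : ℤ) * ((x : ℤ) + m))) *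
          (∑ a2 ∈ Finset.range c, (jacobiSym (a2 : ℤ) q : ℂ) * ec c ((a2 : ℤ) * m2) *
            (∑ a1 ∈ Finset.range c,
              (jacobiSym (a1 : ℤ) q : ℂ) * ec c ((a1 : ℤ) * ((y : ℤ) * a2 + m1))))
        else 0‖
      ≤ ∑ x ∈ Finset.range c, ‖∑ y ∈ Finset.range c,
        if (x * y) % c = 1 % c then
          (∑ a ∈ Finset.range c, (jacobiSym (a : ℤ) q : ℂ) * ec c ((a : ℤ) * ((x : ℤ) + m))) *
          (∑ a2 ∈ Finset.range c, (jacobiSym (a2 : ℤ) q : ℂ) * ec c ((a2 : ℤ) * m2) *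
            (∑ a1 ∈ Finset.range c,
              (jacobiSym (a1 : ℤ) q : ℂ) * ec c ((a1 : ℤ) * ((y : ℤ) * a2 + m1))))
        else 0‖ := norm_sum_le _ _
    _ ≤ ∑ x ∈ Finset.range c, ‖Fsum q r ((x : ℤ) + m)‖ * D := by
        refine Finset.sum_le_sum fun x _ => ?_
        refine le_trans (norm_sum_le _ _) ?_
        have hterm : ∀ y ∈ Finset.range c, 
            ‖if (x * y) % c = 1 % c then
              (∑ a ∈ Finset.range c, (jacobiSym (a : ℤ) q : ℂ) * ec c ((a : ℤ) * ((x : ℤ) + m))) *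
              (∑ a2 ∈ Finset.range c, (jacobiSym (a2 : ℤ) q : ℂ) * ec c ((a2 : ℤ) * m2) *
                (∑ a1 ∈ Finset.range c,
                  (jacobiSym (a1 : ℤ) q : ℂ) * ec c ((a1 : ℤ) * ((y : ℤ) * a2 + m1))))
            else 0‖
            ≤ (if (x * y) % c = 1 % c then ‖Fsum q r ((x : ℤ) + m)‖ * D else 0) := by
          intro y _
          split_ifs with hxy
          · rw [norm_mul]
            have hF : (∑ a ∈ Finset.range c,
                (jacobiSym (a : ℤ) q : ℂ) * ec c ((a : ℤ) * ((x : ℤ) + m)))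
                = Fsum q r ((x : ℤ) + m) := rfl
            rw [hF]
            exact mul_le_mul_of_nonneg_left (hinner x y hxy) (norm_nonneg _)
          · simp
        refine le_trans (Finset.sum_le_sum hterm) ?_
        rw [← Finset.sum_filter]
        rw [Finset.sum_const, nsmul_eq_mul]
        have hb0 : 0 ≤ ‖Fsum q r ((x : ℤ) + m)‖ * D :=
          mul_nonneg (norm_nonneg _) hD0
        have := hcard1 x
        calc (((Finset.range c).filter (fun y => (x * y) % c = 1 % c)).card : ℝ)
              * (‖Fsum q r ((x : ℤ) + m)‖ * D)
            ≤ 1 * (‖Fsum q r ((x : ℤ) + m)‖ * D) := by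
              refine mul_le_mul_of_nonneg_right ?_ hb0
              exact_mod_cast this
          _ = ‖Fsum q r ((x : ℤ) + m)‖ * D := one_mul _
    _ = (∑ x ∈ Finset.range c, ‖Fsum q r ((x : ℤ) + m)‖) * D :=
        (Finset.sum_mul _ _ _).symm
    _ ≤ D * D := by
        refine mul_le_mul_of_nonneg_right ?_ hD0
        have heq : ∀ x ∈ Finset.range c, ‖Fsum q r ((x : ℤ) + m)‖
            = ‖Fsum q r ((1 : ℤ) * x + m)‖ := by
          intro x _; rw [one_mul]
        rw [Finset.sum_congr rfl heq, hD, hc]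
        exact sum_abs_Fsum_le hq hodd hsf hr0 (by simp) m
    _ = (q : ℝ) ^ 3 * (r : ℝ) ^ 2 := by
        rw [hD]
        have hs : Real.sqrt q * Real.sqrt q = (q : ℝ) :=
          Real.mul_self_sqrt (Nat.cast_nonneg q)
        have : (q : ℝ) * ((r : ℝ) * Real.sqrt q) * ((q : ℝ) * ((r : ℝ) * Real.sqrt q))
            = ((q : ℝ) * q * ((r : ℝ) * r)) * (Real.sqrt q * Real.sqrt q) := by ring
        rw [this, hs]
        ring
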